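/- Let p, q be complex n×n matrices satisfying pp* − qq* = 1_n and pqᵗ = qpᵗ (so that [[p, q],[q̄, p̄]] is in Sp(n,ℝ)_ℂ, and then also p*p − qᵗq̄ = 1_n and pᵗq̄ = q*p). Let W be a complex symmetric n×n matrix such that q̄W + p̄ and Wq* + p* are invertible, and set W₁ = (pW + q)(q̄W + p̄)⁻¹. Then W₁ = (Wq* + p*)⁻¹(qᵗ + Wpᵗ), W₁ is symmetric, and 1_n − W₁W̄₁ = (Wq* + p*)⁻¹(1_n − WW̄)(qW̄ + p)⁻¹. In particular, if W ∈ D_n then W₁ ∈ D_n. -/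

import Mathlib

open Matrix
open scoped ComplexOrder

private noncomputable def cj {n : ℕ} (A : Matrix (Fin n) (Fin n) ℂ) :
    Matrix (Fin n) (Fin n) ℂ := A.map (starRingEnd ℂ)

private lemma cj_apply {n : ℕ} (A : Matrix (Fin n) (Fin n) ℂ) (i j : Fin n) :
    cj A i j = star (A i j) := rfl

private lemma cj_eq {n : ℕ} (A : Matrix (Fin n) (Fin n) ℂ) : cj A = Aᴴᵀ := by
  ext i j
  simp [cj_apply, Matrix.conjTranspose_apply, Matrix.transpose_apply]

private lemma cj_mul {n : ℕ} (A B : Matrix (Fin n) (Fin n) ℂ) :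
    cj (A * B) = cj A * cj B := Matrix.map_mul

private lemma cj_add {n : ℕ} (A B : Matrix (Fin n) (Fin n) ℂ) :
    cj (A + B) = cj A + cj B := by
  ext i j
  simp [cj_apply, Matrix.add_apply]

private lemma cj_sub {n : ℕ} (A B : Matrix (Fin n) (Fin n) ℂ) :
    cj (A - B) = cj A - cj B := by
  ext i j
  simp [cj_apply, Matrix.sub_apply]

private lemma cj_one {n : ℕ} : cj (1 : Matrix (Fin n) (Fin n) ℂ) = 1 := by
  ext i j
  simp [cj_apply, Matrix.one_apply, apply_ite]

private lemma cj_conjTranspose {n : ℕ} (A : Matrix (Fin n) (Fin n) ℂ) : cj Aᴴ = Aᵀ := by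
  ext i j
  simp [cj_apply, Matrix.conjTranspose_apply, Matrix.transpose_apply]

private lemma cj_transpose {n : ℕ} (A : Matrix (Fin n) (Fin n) ℂ) : cj Aᵀ = Aᴴ := by
  ext i j
  simp [cj_apply, Matrix.conjTranspose_apply, Matrix.transpose_apply]

private lemma cj_cj {n : ℕ} (A : Matrix (Fin n) (Fin n) ℂ) : cj (cj A) = A := by
  ext i j
  simp [cj_apply]

private lemma transpose_cj {n : ℕ} (A : Matrix (Fin n) (Fin n) ℂ) : (cj A)ᵀ = Aᴴ := by
  ext i j
  simp [cj_apply, Matrix.conjTranspose_apply, Matrix.transpose_apply]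

private lemma conjTranspose_cj {n : ℕ} (A : Matrix (Fin n) (Fin n) ℂ) : (cj A)ᴴ = Aᵀ := by
  ext i j
  simp [cj_apply, Matrix.conjTranspose_apply, Matrix.transpose_apply]

private lemma isUnit_cj {n : ℕ} {A : Matrix (Fin n) (Fin n) ℂ} (h : IsUnit A) :
    IsUnit (cj A) := by
  rw [cj_eq, Matrix.isUnit_transpose _, Matrix.isUnit_conjTranspose _]; exact h

private lemma cj_inv {n : ℕ} (A : Matrix (Fin n) (Fin n) ℂ) : cj A⁻¹ = (cj A)⁻¹ := by
  rw [cj_eq, cj_eq, Matrix.conjTranspose_nonsing_inv, Matrix.transpose_nonsing_inv]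

/-- B * M * Bᴴ is PosDef when M is PosDef and B is a unit. -/
private lemma posDef_mul_mul {n : ℕ} {M : Matrix (Fin n) (Fin n) ℂ} (hM : M.PosDef)
    (B : Matrix (Fin n) (Fin n) ℂ) (hB : IsUnit B) : (B * M * Bᴴ).PosDef := by
  rw [Matrix.posDef_iff_dotProduct_mulVec] at hM ⊢
  refine ⟨Matrix.isHermitian_mul_mul_conjTranspose _ hM.1, fun x hx => ?_⟩
  have hx' : Bᴴ *ᵥ x ≠ 0 := by
    intro h
    apply hx
    have hBH : IsUnit Bᴴ := (Matrix.isUnit_conjTranspose _).mpr hB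
    have := congrArg (fun v => (Bᴴ)⁻¹ *ᵥ v) h
    simpa [Matrix.mulVec_mulVec, Matrix.nonsing_inv_mul _
      ((Matrix.isUnit_iff_isUnit_det _).mp hBH)] using this
  have := hM.2 (x := Bᴴ *ᵥ x) hx'
  simpa only [Matrix.star_mulVec, dotProduct_mulVec, Matrix.vecMul_vecMul,
    Matrix.conjTranspose_conjTranspose, Matrix.mulVec_mulVec, Matrix.mul_assoc] using this

/-- The fractional linear action of Sp(n,ℝ)_ℂ preserves the Siegel ball. -/
theorem stmt_11 (n : ℕ) (p q : Matrix (Fin n) (Fin n) ℂ)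
    (h1 : p * pᴴ - q * qᴴ = 1) (h2 : p * qᵀ = q * pᵀ)
    (W : Matrix (Fin n) (Fin n) ℂ) (hW : Wᵀ = W)
    (hinv1 : IsUnit (q.map (starRingEnd ℂ) * W + p.map (starRingEnd ℂ)))
    (hinv2 : IsUnit (W * qᴴ + pᴴ))
    (W₁ : Matrix (Fin n) (Fin n) ℂ)
    (hW₁ : W₁ = (p * W + q) * (q.map (starRingEnd ℂ) * W + p.map (starRingEnd ℂ))⁻¹) :
    pᴴ * p - qᵀ * q.map (starRingEnd ℂ) = 1 ∧
    pᵀ * q.map (starRingEnd ℂ) = qᴴ * p ∧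
    W₁ = (W * qᴴ + pᴴ)⁻¹ * (qᵀ + W * pᵀ) ∧
    W₁ᵀ = W₁ ∧
    1 - W₁ * W₁.map (starRingEnd ℂ)
      = (W * qᴴ + pᴴ)⁻¹ * (1 - W * W.map (starRingEnd ℂ))
        * (q * W.map (starRingEnd ℂ) + p)⁻¹ ∧
    ((1 - W * W.map (starRingEnd ℂ)).PosDef →
      (1 - W₁ * W₁.map (starRingEnd ℂ)).PosDef) := by
  -- notation
  have hqc : q.map (starRingEnd ℂ) = cj q := rfl
  have hpc : p.map (starRingEnd ℂ) = cj p := rfl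
  have hWc : W.map (starRingEnd ℂ) = cj W := rfl
  rw [hqc, hpc] at hinv1 hW₁
  rw [hqc, hWc]
  -- conjugates of hypotheses
  have h1c : cj p * pᵀ - cj q * qᵀ = 1 := by
    have := congrArg cj h1
    rwa [cj_sub, cj_mul, cj_mul, cj_one, cj_conjTranspose, cj_conjTranspose] at this
  have h2c : cj p * qᴴ = cj q * pᴴ := by
    have := congrArg cj h2
    rwa [cj_mul, cj_mul, cj_transpose, cj_transpose] at this
  -- block matrix argument: M * N = 1 hence N * M = 1
  set M : Matrix (Fin n ⊕ Fin n) (Fin n ⊕ Fin n) ℂ := Matrix.fromBlocks p q (cj q) (cj p)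
  set N : Matrix (Fin n ⊕ Fin n) (Fin n ⊕ Fin n) ℂ := Matrix.fromBlocks pᴴ (-qᵀ) (-qᴴ) pᵀ
  have hMN : M * N = 1 := by
    have b11 : p * pᴴ + q * (-qᴴ) = 1 := by rw [← h1]; noncomm_ring
    have b12 : p * (-qᵀ) + q * pᵀ = 0 := by rw [Matrix.mul_neg, h2]; abel
    have b21 : cj q * pᴴ + cj p * (-qᴴ) = 0 := by rw [Matrix.mul_neg, h2c]; abel
    have b22 : cj q * (-qᵀ) + cj p * pᵀ = 1 := by
      rw [← h1c]; noncomm_ring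
    rw [show (1 : Matrix (Fin n ⊕ Fin n) (Fin n ⊕ Fin n) ℂ) =
      Matrix.fromBlocks 1 0 0 1 from (Matrix.fromBlocks_one).symm,
      Matrix.fromBlocks_multiply, b11, b12, b21, b22]
  have hNM : N * M = 1 := mul_eq_one_comm.mp hMN
  rw [show (1 : Matrix (Fin n ⊕ Fin n) (Fin n ⊕ Fin n) ℂ) =
    Matrix.fromBlocks 1 0 0 1 from (Matrix.fromBlocks_one).symm,
    Matrix.fromBlocks_multiply, Matrix.fromBlocks_inj] at hNM
  obtain ⟨e11, e12, e21, e22⟩ := hNM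
  -- the relations
  have ra : pᴴ * p - qᵀ * cj q = 1 := by
    rw [← e11]; noncomm_ring
  have rb : pᵀ * cj q = qᴴ * p := by
    have : (-qᴴ) * p + pᵀ * cj q = 0 := e21
    rw [neg_mul, neg_add_eq_zero] at this
    exact this.symm
  -- conjugates of the relations
  have rac : pᵀ * cj p - qᴴ * q = 1 := by
    have := congrArg cj ra
    rwa [cj_sub, cj_mul, cj_mul, cj_one, cj_conjTranspose, cj_transpose, cj_cj] at this
  have rbc : pᴴ * q = qᵀ * cj p := by
    have := congrArg cj rb
    rwa [cj_mul, cj_mul, cj_transpose, cj_cj, cj_conjTranspose] at this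
  refine ⟨ra, rb, ?_⟩
  -- abbreviations
  set A : Matrix (Fin n) (Fin n) ℂ := W * qᴴ + pᴴ with hA
  set B : Matrix (Fin n) (Fin n) ℂ := cj q * W + cj p with hB
  have hAdet : IsUnit A.det := (Matrix.isUnit_iff_isUnit_det _).mp hinv2
  have hBdet : IsUnit B.det := (Matrix.isUnit_iff_isUnit_det _).mp hinv1
  -- key identity 1
  have key1 : A * (p * W + q) = (qᵀ + W * pᵀ) * B := by
    have expand : A * (p * W + q) - (qᵀ + W * pᵀ) * B
        = W * (qᴴ * p - pᵀ * cj q) * W + W * (qᴴ * q - pᵀ * cj p + 1)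
          + (pᴴ * p - qᵀ * cj q - 1) * W + (pᴴ * q - qᵀ * cj p) := by
      rw [hA, hB]; noncomm_ring
    have z1 : qᴴ * p - pᵀ * cj q = 0 := by rw [rb]; noncomm_ring
    have z2 : qᴴ * q - pᵀ * cj p + 1 = 0 := by
      rw [sub_eq_iff_eq_add] at rac; rw [rac]; noncomm_ring
    have z3 : pᴴ * p - qᵀ * cj q - 1 = 0 := by rw [ra]; noncomm_ring
    have z4 : pᴴ * q - qᵀ * cj p = 0 := by rw [rbc]; noncomm_ring
    rw [z1, z2, z3, z4] at expand
    simp only [Matrix.mul_zero, Matrix.zero_mul, add_zero, Matrix.mul_one] at expand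
    rw [sub_eq_zero] at expand
    exact expand
  -- third claim
  have claim3 : W₁ = A⁻¹ * (qᵀ + W * pᵀ) := by
    rw [hW₁]
    calc (p * W + q) * B⁻¹ = A⁻¹ * (A * ((p * W + q) * B⁻¹)) := by
          rw [← Matrix.mul_assoc, Matrix.nonsing_inv_mul A hAdet, Matrix.one_mul]
      _ = A⁻¹ * ((qᵀ + W * pᵀ) * (B * B⁻¹)) := by
          rw [show A * ((p * W + q) * B⁻¹) = A * (p * W + q) * B⁻¹ from
            (Matrix.mul_assoc _ _ _).symm, key1, Matrix.mul_assoc]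
      _ = A⁻¹ * (qᵀ + W * pᵀ) := by
          rw [Matrix.mul_nonsing_inv B hBdet, Matrix.mul_one]
  refine ⟨claim3, ?_⟩
  -- symmetry
  have hBt : Bᵀ = A := by
    rw [hB, hA]
    rw [Matrix.transpose_add, Matrix.transpose_mul, hW, transpose_cj, transpose_cj]
  have claim4 : W₁ᵀ = W₁ := by
    conv_lhs => rw [hW₁]
    rw [Matrix.transpose_mul, Matrix.transpose_nonsing_inv, hBt,
      Matrix.transpose_add, Matrix.transpose_mul, hW, claim3, add_comm (W * pᵀ) qᵀ]
  refine ⟨claim4, ?_⟩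
  -- conjugate of W₁
  have hBc : cj B = q * cj W + p := by
    rw [hB, cj_add, cj_mul, cj_cj, cj_cj]
  have hWH : Wᴴ = cj W := by rw [← cj_transpose W, hW]
  have hAHc : Aᴴ = cj B := by
    rw [hA, hBc, Matrix.conjTranspose_add, Matrix.conjTranspose_mul,
      Matrix.conjTranspose_conjTranspose, Matrix.conjTranspose_conjTranspose, hWH]
  have hcBdet : IsUnit (cj B).det := by
    rw [← hAHc]
    exact (Matrix.isUnit_iff_isUnit_det _).mp ((Matrix.isUnit_conjTranspose _).mpr hinv2)
  have hW₁c : W₁.map (starRingEnd ℂ) = (cj p * cj W + cj q) * (cj B)⁻¹ := by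
    show cj W₁ = _
    rw [hW₁, cj_mul, cj_inv, cj_add, cj_mul]
  -- key identity 2
  have key2 : A * cj B - (qᵀ + W * pᵀ) * (cj p * cj W + cj q) = 1 - W * cj W := by
    have expand : A * cj B - (qᵀ + W * pᵀ) * (cj p * cj W + cj q) - (1 - W * cj W)
        = W * (qᴴ * q - pᵀ * cj p + 1) * cj W + W * (qᴴ * p - pᵀ * cj q)
          + (pᴴ * q - qᵀ * cj p) * cj W + (pᴴ * p - qᵀ * cj q - 1) := by
      rw [hA, hBc]; noncomm_ring
    have z1 : qᴴ * p - pᵀ * cj q = 0 := by rw [rb]; noncomm_ring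
    have z2 : qᴴ * q - pᵀ * cj p + 1 = 0 := by
      rw [sub_eq_iff_eq_add] at rac; rw [rac]; noncomm_ring
    have z3 : pᴴ * p - qᵀ * cj q - 1 = 0 := by rw [ra]; noncomm_ring
    have z4 : pᴴ * q - qᵀ * cj p = 0 := by rw [rbc]; noncomm_ring
    rw [z1, z2, z3, z4] at expand
    simp only [Matrix.mul_zero, Matrix.zero_mul, add_zero, Matrix.mul_one] at expand
    rw [sub_eq_zero] at expand
    exact expand
  -- fifth claim
  have claim5 : 1 - W₁ * W₁.map (starRingEnd ℂ)
      = A⁻¹ * (1 - W * cj W) * (cj B)⁻¹ := by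
    have e1 : W₁ * W₁.map (starRingEnd ℂ)
        = A⁻¹ * ((qᵀ + W * pᵀ) * (cj p * cj W + cj q)) * (cj B)⁻¹ := by
      rw [hW₁c, claim3]; noncomm_ring
    have e2 : (1 : Matrix (Fin n) (Fin n) ℂ) = A⁻¹ * (A * cj B) * (cj B)⁻¹ := by
      rw [← Matrix.mul_assoc, Matrix.mul_assoc _ A (cj B), ← Matrix.mul_assoc A⁻¹ A,
        Matrix.nonsing_inv_mul A hAdet, Matrix.one_mul,
        Matrix.mul_nonsing_inv _ hcBdet]
    calc 1 - W₁ * W₁.map (starRingEnd ℂ)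
        = A⁻¹ * (A * cj B) * (cj B)⁻¹
          - A⁻¹ * ((qᵀ + W * pᵀ) * (cj p * cj W + cj q)) * (cj B)⁻¹ := by
          rw [← e1, ← e2]
      _ = A⁻¹ * (A * cj B - (qᵀ + W * pᵀ) * (cj p * cj W + cj q)) * (cj B)⁻¹ := by
          rw [Matrix.mul_sub, Matrix.sub_mul]
      _ = A⁻¹ * (1 - W * cj W) * (cj B)⁻¹ := by rw [key2]
  rw [hBc] at claim5
  refine ⟨claim5, ?_⟩
  -- positive definiteness
  intro hpos
  have hinvA : IsUnit A⁻¹ := by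
    rw [Matrix.isUnit_nonsing_inv_iff]
    exact hinv2
  have : (A⁻¹ * (1 - W * cj W) * (A⁻¹)ᴴ).PosDef := posDef_mul_mul hpos A⁻¹ hinvA
  rw [Matrix.conjTranspose_nonsing_inv, hAHc, hBc] at this
  rw [claim5]
  exact this
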